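/- Fix a real p with 0 < p ≤ 1/(t+1) for an integer t ≥ 1, and let μ_p be the product measure on 2^[n] with μ_p(F) = p^|F|(1−p)^(n−|F|). Then for the function g(p) := (t+2)p(1−p) + p², one has μ_p(𝓕_1^t(n)) = g(p)·μ_p(𝓕_0^t(n)); g is strictly increasing on (0, 1/(t+1)], and g(1/(t+1)) = 1, so μ_p(𝓕_1^t(n)) ≤ μ_p(𝓕_0^t(n)) = p^t with equality iff p = 1/(t+1). -/
import Mathlib


open Finset

/-- The `p`-biased measure of a family of subsets of `[n]`. -/
noncomputable def mu (p : ℝ) (n : ℕ) (𝓕 : Finset (Finset ℕ)) : ℝ :=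
  ∑ F ∈ 𝓕, p ^ F.card * (1 - p) ^ (n - F.card)

/-- The non-uniform Frankl family `𝓕_i^t(n) = {F ⊆ [n] : |F ∩ [t+2i]| ≥ t+i}`. -/
def franklFam (n t i : ℕ) : Finset (Finset ℕ) :=
  ((Finset.Icc 1 n).powerset).filter
    (fun F => t + i ≤ (F ∩ Finset.Icc 1 (t + 2 * i)).card)

lemma sum_powerset_one (p : ℝ) (s : Finset ℕ) :
    ∑ T ∈ s.powerset, p ^ T.card * (1 - p) ^ (s.card - T.card) = 1 := by
  have h := Finset.prod_add (fun _ : ℕ => p) (fun _ : ℕ => 1 - p) s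
  simp only [Finset.prod_const] at h
  rw [show p + (1 - p) = 1 by ring, one_pow] at h
  calc ∑ T ∈ s.powerset, p ^ T.card * (1 - p) ^ (s.card - T.card)
      = ∑ T ∈ s.powerset, p ^ T.card * (1 - p) ^ ((s \ T).card) := by
        refine Finset.sum_congr rfl fun T hT => ?_
        rw [Finset.card_sdiff_of_subset (Finset.mem_powerset.mp hT)]
    _ = 1 := h.symm

lemma mu_filter (p : ℝ) (n m k : ℕ) (hmn : m ≤ n) :
    mu p n (((Finset.Icc 1 n).powerset).filter (fun F => k ≤ (F ∩ Finset.Icc 1 m).card))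
      = ∑ S ∈ ((Finset.Icc 1 m).powerset).filter (fun S => k ≤ S.card),
          p ^ S.card * (1 - p) ^ (m - S.card) := by
  classical
  unfold mu
  have hone := sum_powerset_one p (Finset.Icc (m + 1) n)
  have hcard : (Finset.Icc (m + 1) n).card = n - m := by rw [Nat.card_Icc]; omega
  rw [hcard] at hone
  have hsub : Finset.Icc 1 m ⊆ Finset.Icc 1 n := Finset.Icc_subset_Icc_right hmn
  have hsub2 : Finset.Icc (m + 1) n ⊆ Finset.Icc 1 n :=
    Finset.Icc_subset_Icc_left (by omega)
  -- helper facts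
  have hinter : ∀ S T : Finset ℕ, S ⊆ Finset.Icc 1 m → T ⊆ Finset.Icc (m + 1) n →
      (S ∪ T) ∩ Finset.Icc 1 m = S := by
    intro S T hS hT
    ext x
    simp only [Finset.mem_inter, Finset.mem_union, Finset.mem_Icc]
    constructor
    · rintro ⟨h | h, hx⟩
      · exact h
      · have := hT h; simp only [Finset.mem_Icc] at this; omega
    · intro h
      have := hS h; simp only [Finset.mem_Icc] at this
      exact ⟨Or.inl h, this⟩
  have hsdiff : ∀ S T : Finset ℕ, S ⊆ Finset.Icc 1 m → T ⊆ Finset.Icc (m + 1) n →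
      (S ∪ T) \ Finset.Icc 1 m = T := by
    intro S T hS hT
    ext x
    simp only [Finset.mem_sdiff, Finset.mem_union, Finset.mem_Icc]
    constructor
    · rintro ⟨h | h, hx⟩
      · have := hS h; simp only [Finset.mem_Icc] at this; omega
      · exact h
    · intro h
      have := hT h; simp only [Finset.mem_Icc] at this
      exact ⟨Or.inr h, by omega⟩
  calc ∑ F ∈ ((Finset.Icc 1 n).powerset).filter (fun F => k ≤ (F ∩ Finset.Icc 1 m).card),
        p ^ F.card * (1 - p) ^ (n - F.card)
      = ∑ P ∈ (((Finset.Icc 1 m).powerset).filter (fun S => k ≤ S.card)) ×ˢ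
          (Finset.Icc (m + 1) n).powerset,
          (p ^ P.1.card * (1 - p) ^ (m - P.1.card)) *
          (p ^ P.2.card * (1 - p) ^ ((n - m) - P.2.card)) := by
        apply Finset.sum_nbij' (fun F => (F ∩ Finset.Icc 1 m, F \ Finset.Icc 1 m))
          (fun P => P.1 ∪ P.2)
        · intro F hF
          simp only [Finset.mem_filter, Finset.mem_powerset] at hF
          simp only [Finset.mem_product, Finset.mem_filter, Finset.mem_powerset]
          refine ⟨⟨Finset.inter_subset_right, hF.2⟩, ?_⟩
          intro x hx
          simp only [Finset.mem_sdiff, Finset.mem_Icc] at hx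
          have := hF.1 hx.1
          simp only [Finset.mem_Icc] at this ⊢
          omega
        · intro P hP
          simp only [Finset.mem_product, Finset.mem_filter, Finset.mem_powerset] at hP
          simp only [Finset.mem_filter, Finset.mem_powerset]
          refine ⟨Finset.union_subset (hP.1.1.trans hsub) (hP.2.trans hsub2), ?_⟩
          rw [hinter P.1 P.2 hP.1.1 hP.2]
          exact hP.1.2
        · intro F hF
          simp only [Finset.mem_filter, Finset.mem_powerset] at hF
          ext x
          simp only [Finset.mem_union, Finset.mem_inter, Finset.mem_sdiff]
          tauto
        · intro P hP
          simp only [Finset.mem_product, Finset.mem_filter, Finset.mem_powerset] at hP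
          have h1 := hinter P.1 P.2 hP.1.1 hP.2
          have h2 := hsdiff P.1 P.2 hP.1.1 hP.2
          simp only [h1, h2]
        · intro F hF
          simp only [Finset.mem_filter, Finset.mem_powerset] at hF
          have hdisj : Disjoint (F ∩ Finset.Icc 1 m) (F \ Finset.Icc 1 m) :=
            Finset.disjoint_left.mpr (by
              intro x hx hy
              simp only [Finset.mem_inter] at hx
              simp only [Finset.mem_sdiff] at hy
              exact hy.2 hx.2)
          have hcardF : F.card = (F ∩ Finset.Icc 1 m).card + (F \ Finset.Icc 1 m).card := by
            rw [← Finset.card_union_of_disjoint hdisj]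
            congr 1
            ext x
            simp only [Finset.mem_union, Finset.mem_inter, Finset.mem_sdiff]
            tauto
          have ha : (F ∩ Finset.Icc 1 m).card ≤ m := by
            have := Finset.card_le_card (show F ∩ Finset.Icc 1 m ⊆ Finset.Icc 1 m from
              Finset.inter_subset_right)
            rw [Nat.card_Icc] at this
            omega
          have hbsub : F \ Finset.Icc 1 m ⊆ Finset.Icc (m + 1) n := by
            intro x hx
            simp only [Finset.mem_sdiff, Finset.mem_Icc] at hx
            have := hF.1 hx.1
            simp only [Finset.mem_Icc] at this ⊢
            omega
          have hb : (F \ Finset.Icc 1 m).card ≤ n - m := by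
            have := Finset.card_le_card hbsub
            rw [Nat.card_Icc] at this
            omega
          have hFn : F.card ≤ n := by
            have := Finset.card_le_card hF.1
            rwa [Nat.card_Icc, Nat.add_sub_cancel] at this
          have hexp : n - F.card = (m - (F ∩ Finset.Icc 1 m).card) +
              ((n - m) - (F \ Finset.Icc 1 m).card) := by omega
          dsimp only
          rw [hcardF]
          have hexp' : n - ((F ∩ Finset.Icc 1 m).card + (F \ Finset.Icc 1 m).card)
              = (m - (F ∩ Finset.Icc 1 m).card) +
                ((n - m) - (F \ Finset.Icc 1 m).card) := by omega
          rw [hexp', pow_add, pow_add]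
          ring
    _ = _ := by
        rw [Finset.sum_product]
        refine Finset.sum_congr rfl fun S hS => ?_
        dsimp only
        rw [← Finset.mul_sum, hone, mul_one]

lemma mu0_eval (p : ℝ) (n t : ℕ) (h : t ≤ n) : mu p n (franklFam n t 0) = p ^ t := by
  have key := mu_filter p n t t h
  have hfam : franklFam n t 0
      = ((Finset.Icc 1 n).powerset).filter (fun F => t ≤ (F ∩ Finset.Icc 1 t).card) := by
    unfold franklFam; norm_num
  rw [hfam, key]
  have hfil : ((Finset.Icc 1 t).powerset).filter (fun S => t ≤ S.card)
      = {Finset.Icc 1 t} := by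
    ext S
    simp only [Finset.mem_filter, Finset.mem_powerset, Finset.mem_singleton]
    constructor
    · rintro ⟨h1, h2⟩
      exact Finset.eq_of_subset_of_card_le h1 (by rw [Nat.card_Icc]; omega)
    · rintro rfl
      refine ⟨subset_rfl, ?_⟩
      rw [Nat.card_Icc]; omega
  rw [hfil, Finset.sum_singleton, Nat.card_Icc]
  simp

lemma mu1_eval (p : ℝ) (n t : ℕ) (h : t + 2 ≤ n) :
    mu p n (franklFam n t 1)
      = (t + 2 : ℝ) * (p ^ (t + 1) * (1 - p)) + p ^ (t + 2) := by
  have key := mu_filter p n (t + 2) (t + 1) h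
  have hfam : franklFam n t 1
      = ((Finset.Icc 1 n).powerset).filter
          (fun F => t + 1 ≤ (F ∩ Finset.Icc 1 (t + 2)).card) := by
    unfold franklFam; norm_num
  rw [hfam, key]
  have hu : (Finset.Icc 1 (t + 2)).card = t + 2 := by rw [Nat.card_Icc]; omega
  have hfil : ((Finset.Icc 1 (t + 2)).powerset).filter (fun S => t + 1 ≤ S.card)
      = (Finset.Icc 1 (t + 2)).powersetCard (t + 1)
        ∪ (Finset.Icc 1 (t + 2)).powersetCard (t + 2) := by
    ext S
    simp only [Finset.mem_filter, Finset.mem_powerset, Finset.mem_union,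
      Finset.mem_powersetCard]
    constructor
    · rintro ⟨h1, h2⟩
      have hle := Finset.card_le_card h1
      rw [hu] at hle
      have : S.card = t + 1 ∨ S.card = t + 2 := by omega
      tauto
    · rintro (⟨h1, h2⟩ | ⟨h1, h2⟩) <;> exact ⟨h1, by omega⟩
  have hdisj : Disjoint ((Finset.Icc 1 (t + 2)).powersetCard (t + 1))
      ((Finset.Icc 1 (t + 2)).powersetCard (t + 2)) := by
    rw [Finset.disjoint_left]
    intro S hS1 hS2
    rw [Finset.mem_powersetCard] at hS1 hS2
    omega
  rw [hfil, Finset.sum_union hdisj]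
  have e1 : ∑ S ∈ (Finset.Icc 1 (t + 2)).powersetCard (t + 1),
      p ^ S.card * (1 - p) ^ (t + 2 - S.card)
      = (t + 2 : ℝ) * (p ^ (t + 1) * (1 - p)) := by
    rw [Finset.sum_congr rfl (fun S hS => by
      rw [(Finset.mem_powersetCard.mp hS).2, show t + 2 - (t + 1) = 1 from by omega])]
    rw [Finset.sum_const, Finset.card_powersetCard, hu, Nat.choose_succ_self_right,
      nsmul_eq_mul, pow_one]
    push_cast
    ring
  have e2 : ∑ S ∈ (Finset.Icc 1 (t + 2)).powersetCard (t + 2),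
      p ^ S.card * (1 - p) ^ (t + 2 - S.card)
      = p ^ (t + 2) := by
    rw [Finset.sum_congr rfl (fun S hS => by
      rw [(Finset.mem_powersetCard.mp hS).2, Nat.sub_self])]
    rw [Finset.sum_const, Finset.card_powersetCard, hu, Nat.choose_self]
    simp
  rw [e1, e2]

/-- Comparison of the measures of `𝓕_1^t(n)` and `𝓕_0^t(n)` via the function
`g(p) = (t+2)p(1-p) + p²`. -/
theorem stmt19 (n t : ℕ) (ht : 1 ≤ t) (hn : t + 2 ≤ n)
    (p : ℝ) (hp0 : 0 < p) (hp1 : p ≤ 1 / (t + 1)) :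
    mu p n (franklFam n t 1)
        = ((t + 2 : ℝ) * p * (1 - p) + p ^ 2) * mu p n (franklFam n t 0) ∧
      StrictMonoOn (fun x : ℝ => (t + 2 : ℝ) * x * (1 - x) + x ^ 2)
        (Set.Ioc (0 : ℝ) (1 / (t + 1))) ∧
      (t + 2 : ℝ) * (1 / (t + 1)) * (1 - 1 / (t + 1)) + (1 / (t + 1)) ^ 2 = 1 ∧
      mu p n (franklFam n t 0) = p ^ t ∧
      mu p n (franklFam n t 1) ≤ p ^ t ∧
      (mu p n (franklFam n t 1) = p ^ t ↔ p = 1 / (t + 1)) := by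
  have ht1 : (0 : ℝ) < (t : ℝ) + 1 := by positivity
  have hmu0 : mu p n (franklFam n t 0) = p ^ t := mu0_eval p n t (by omega)
  have hmu1 : mu p n (franklFam n t 1)
      = ((t + 2 : ℝ) * p * (1 - p) + p ^ 2) * p ^ t := by
    rw [mu1_eval p n t hn]; ring
  have hgone : (t + 2 : ℝ) * (1 / (t + 1)) * (1 - 1 / (t + 1)) + (1 / (t + 1)) ^ 2 = 1 := by
    field_simp
    ring
  have hmono : StrictMonoOn (fun x : ℝ => (t + 2 : ℝ) * x * (1 - x) + x ^ 2)
      (Set.Ioc (0 : ℝ) (1 / (t + 1))) := by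
    intro a ha b hb hab
    simp only
    have hb1 : b * ((t : ℝ) + 1) ≤ 1 := by
      rw [← le_div_iff₀ ht1]; exact hb.2
    have ha1 : a * ((t : ℝ) + 1) < 1 :=
      lt_of_lt_of_le (by nlinarith [ha.1]) hb1
    nlinarith [mul_pos (sub_pos.mpr hab)
      (show (0 : ℝ) < (t + 2 : ℝ) - ((t : ℝ) + 1) * (a + b) by nlinarith)]
  have hpt : (0 : ℝ) < p ^ t := pow_pos hp0 t
  have hmem : p ∈ Set.Ioc (0 : ℝ) (1 / (t + 1)) := ⟨hp0, hp1⟩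
  have hmem' : (1 / ((t : ℝ) + 1)) ∈ Set.Ioc (0 : ℝ) (1 / (t + 1)) :=
    ⟨by positivity, le_refl _⟩
  have hgle : (t + 2 : ℝ) * p * (1 - p) + p ^ 2 ≤ 1 := by
    rcases eq_or_lt_of_le hp1 with h | h
    · rw [h] at *; exact le_of_eq hgone
    · have := hmono hmem hmem' h
      simp only at this <;> linarith [hgone]
  refine ⟨hmu1.trans (by rw [hmu0]), hmono, hgone, hmu0, ?_, ?_⟩
  · rw [hmu1]
    nlinarith [hpt, hgle]
  · constructor
    · intro heq
      rw [hmu1] at heq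
      have hg : (t + 2 : ℝ) * p * (1 - p) + p ^ 2 = 1 := by
        have := mul_right_cancel₀ (ne_of_gt hpt) (heq.trans (one_mul (p ^ t)).symm)
        exact this
      have := hmono.injOn hmem hmem' (by show _ = _; rw [hg, hgone])
      exact this
    · intro heq
      rw [hmu1, heq, hgone, one_mul]
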